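/- Let (X,d) be a proper metric space, μ a Borel measure on X that is finite and positive on every bounded open set, x₀ ∈ X, N > 1 and k > 0, and suppose μ(B_ρ(x₀)) = k ω_N ρ^N for all ρ > 0. Then the constant N²/4 in the Heisenberg–Pauli–Weyl uncertainty principle is sharp: for every ε > 0 there exists a nonzero Lipschitz function u : X → ℝ with compact support such that (∫_X (lip u)² dμ) · (∫_X d(x₀,x)² u² dμ) ≤ (N²/4 + ε) · (∫_X u² dμ)². -/

import Mathlib

open MeasureTheory Filter

/-- `ω_N = π^{N/2} / Γ(N/2 + 1)`, the volume of the unit ball in dimension `N`. -/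
noncomputable def omegaN (N : ℝ) : ℝ := Real.pi ^ (N / 2) / Real.Gamma (N / 2 + 1)

/-- The local Lipschitz constant `lip u(x) = limsup_{y → x} |u y - u x| / d(x,y)`
(equal to `0`, by convention of `Real` limsups, if `x` is an isolated point). -/
noncomputable def lipConst {X : Type*} [MetricSpace X] (u : X → ℝ) (x : X) : ℝ :=
  limsup (fun y => |u y - u x| / dist x y) (nhdsWithin x {x}ᶜ)

open Set
open scoped NNReal ENNReal



noncomputable def betaI (a : ℝ) (q : ℕ) : ℝ := ∫ t in (0:ℝ)..1, t ^ a * (1 - t ^ 2) ^ q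

lemma cont_rpow_const {a : ℝ} (ha : 0 < a) : Continuous fun t : ℝ => t ^ a := by
  rw [continuous_iff_continuousAt]
  exact fun x => Real.continuousAt_rpow_const x a (Or.inr ha.le)

lemma cont_betaI_integrand {a : ℝ} (ha : 0 < a) (q : ℕ) :
    Continuous fun t : ℝ => t ^ a * (1 - t ^ 2) ^ q :=
  (cont_rpow_const ha).mul (by continuity)

lemma betaI_intable {a : ℝ} (ha : 0 < a) (q : ℕ) :
    IntervalIntegrable (fun t : ℝ => t ^ a * (1 - t ^ 2) ^ q) volume 0 1 :=
  (cont_betaI_integrand ha q).intervalIntegrable 0 1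

lemma betaI_pos {a : ℝ} (ha : 0 < a) (q : ℕ) : 0 < betaI a q := by
  apply intervalIntegral.intervalIntegral_pos_of_pos_on (betaI_intable ha q) _ one_pos
  intro t ht
  have h1 : 0 < t ^ a := Real.rpow_pos_of_pos ht.1 a
  have h2 : (0:ℝ) < 1 - t ^ 2 := by nlinarith [ht.1, ht.2]
  positivity

lemma betaI_rec {a : ℝ} (ha : 0 < a) (q : ℕ) :
    (a + 1) * betaI a (q + 1) = (2 * (q + 1)) * betaI (a + 2) q := by
  have hd : ∀ t ∈ Set.uIcc (0:ℝ) 1,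
      HasDerivAt (fun s : ℝ => s ^ (a+1) * (1 - s ^ 2) ^ (q+1))
        ((a+1) * t ^ a * (1 - t^2)^(q+1) + t ^ (a+1) * ((↑(q+1)) * (1 - t^2)^q * (-(2*t)))) t := by
    intro t _
    have h1 : HasDerivAt (fun s : ℝ => s ^ (a+1)) ((a+1) * t ^ a) t := by
      have := Real.hasDerivAt_rpow_const (x := t) (p := a + 1) (Or.inr (by linarith))
      simpa using this
    have h2 : HasDerivAt (fun s : ℝ => (1 - s ^ 2) ^ (q+1))
        ((↑(q+1)) * (1 - t^2)^q * (-(2*t))) t := by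
      have hs : HasDerivAt (fun s : ℝ => 1 - s ^ 2) (-(2*t)) t := by
        simpa using ((hasDerivAt_pow 2 t).const_sub 1)
      have := (hs.fun_pow (q+1))
      simpa [mul_comm, mul_assoc, mul_left_comm] using this
    simpa using h1.fun_mul h2
  have hftc := intervalIntegral.integral_eq_sub_of_hasDerivAt hd ?_
  · have h0 : ((0:ℝ) ^ (a+1) * (1 - (0:ℝ) ^ 2) ^ (q+1)) = 0 := by
      rw [Real.zero_rpow (by linarith)]; ring
    have h1 : ((1:ℝ) ^ (a+1) * (1 - (1:ℝ) ^ 2) ^ (q+1)) = 0 := by norm_num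
    rw [h1, h0, sub_zero] at hftc
    -- hftc : ∫ deriv = 0
    have hsplit : (∫ t in (0:ℝ)..1,
        ((a+1) * t ^ a * (1 - t^2)^(q+1) + t ^ (a+1) * ((↑(q+1)) * (1 - t^2)^q * (-(2*t)))))
        = (a+1) * betaI a (q+1) - (2*(q+1)) * betaI (a+2) q := by
      have hcongr : ∀ t ∈ Set.uIcc (0:ℝ) 1,
          ((a+1) * t ^ a * (1 - t^2)^(q+1) + t ^ (a+1) * ((↑(q+1)) * (1 - t^2)^q * (-(2*t))))
          = (a+1) * (t ^ a * (1 - t^2)^(q+1)) - (2*(q+1)) * (t ^ (a+2) * (1 - t^2)^q) := by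
        intro t ht
        rcases eq_or_ne t 0 with rfl | ht0
        · rw [Real.zero_rpow ha.ne', Real.zero_rpow (by linarith : a + 1 ≠ 0),
            Real.zero_rpow (by linarith : a + 2 ≠ 0)]; ring
        · have htpos : 0 < t := by
            rw [Set.uIcc_of_le (by norm_num)] at ht
            exact lt_of_le_of_ne ht.1 (Ne.symm ht0)
          have h3 : t ^ (a + 2) = t ^ a * t ^ 2 := by
            rw [← Real.rpow_natCast t 2, ← Real.rpow_add htpos]; norm_num
          have h4 : t ^ (a + 1) = t ^ a * t := by
            rw [Real.rpow_add htpos, Real.rpow_one]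
          rw [h3, h4]; push_cast; ring
      rw [intervalIntegral.integral_congr hcongr, intervalIntegral.integral_sub,
        intervalIntegral.integral_const_mul, intervalIntegral.integral_const_mul]
      · rfl
      · exact (betaI_intable ha (q+1)).const_mul _
      · exact (betaI_intable (by linarith) q).const_mul _
    rw [hsplit] at hftc
    linarith
  · apply Continuous.intervalIntegrable
    have c1 := cont_rpow_const ha
    have c2 := cont_rpow_const (show (0:ℝ) < a + 1 by linarith)
    continuity

lemma betaI_split {a : ℝ} (ha : 0 < a) (q : ℕ) :
    betaI a (q + 1) = betaI a q - betaI (a + 2) q := by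
  have hcongr : ∀ t ∈ Set.uIcc (0:ℝ) 1,
      t ^ a * (1 - t^2)^(q+1) = t ^ a * (1 - t^2)^q - t ^ (a+2) * (1 - t^2)^q := by
    intro t ht
    rcases eq_or_ne t 0 with rfl | ht0
    · rw [Real.zero_rpow (by linarith), Real.zero_rpow (by linarith)]; ring
    · have htpos : 0 < t := by
        rw [Set.uIcc_of_le (by norm_num)] at ht
        exact lt_of_le_of_ne ht.1 (Ne.symm ht0)
      have h3 : t ^ (a + 2) = t ^ a * t ^ 2 := by
        rw [← Real.rpow_natCast t 2, ← Real.rpow_add htpos]; norm_num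
      rw [h3, pow_succ]; ring
  unfold betaI
  rw [intervalIntegral.integral_congr hcongr, intervalIntegral.integral_sub
    (betaI_intable ha q) (betaI_intable (by linarith) q)]


lemma betaI_core (N : ℝ) (hN : 1 < N) (j : ℕ) :
    2*(2*(j:ℝ)+3)*(N+4*(j:ℝ)+10) * ((4*((j:ℝ)+2)^2 * betaI (N+1) (2*j+2)) * betaI (N+1) (2*j+4))
      = N^2*((j:ℝ)+2)*(N+4*(j:ℝ)+8) * (betaI (N-1) (2*j+4))^2 := by
  have hN1 : (0:ℝ) < N - 1 := by linarith
  have hN2 : (0:ℝ) < N + 1 := by linarith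
  have h1 := betaI_rec hN1 (2*j+3)
  have h2 := betaI_rec hN2 (2*j+3)
  have h3 := betaI_split hN2 (2*j+3)
  have h4 := betaI_rec hN2 (2*j+2)
  have h5 := betaI_split hN2 (2*j+2)
  rw [show N-1+1 = N by ring, show N-1+2 = N+1 by ring] at h1
  rw [show N+1+2 = N+3 by ring] at h2 h3 h4 h5
  rw [show 2*j+3+1 = 2*j+4 by ring] at h1 h2 h3
  rw [show 2*j+2+1 = 2*j+3 by ring] at h4 h5
  push_cast at h1 h2 h3 h4 h5
  set S := betaI (N-1) (2*j+4)
  set Q := betaI (N+1) (2*j+3)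
  set R := betaI (N+1) (2*j+4)
  set P := betaI (N+1) (2*j+2)
  set T := betaI (N+3) (2*j+3)
  set U := betaI (N+3) (2*j+2)
  -- h1 : N * S = (2*(2j+3+1)) * Q ; h2 : (N+2) R = same * T; h3 : R = Q - T
  -- h4 : (N+2) Q = (2*(2j+2+1)) * U ; h5 : Q = P - U
  have hA : (N+4*(j:ℝ)+10) * R = N * S := by
    have hT : T = Q - R := by linarith
    nlinarith [h2, h1, hT]
  have hB : (N+4*(j:ℝ)+8) * Q = (4*(j:ℝ)+6) * P := by
    have hU : U = P - Q := by linarith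
    nlinarith [h4, hU]
  have h1' : (4*(j:ℝ)+8) * Q = N * S := by linarith
  linear_combination (-(((j:ℝ)+2)*(4*(j:ℝ)+8)*(N+4*(j:ℝ)+10)*R)) * hB +
    (((j:ℝ)+2)*(4*(j:ℝ)+8)*(N+4*(j:ℝ)+8)*Q) * hA +
    (((j:ℝ)+2)*(N+4*(j:ℝ)+8)*N*S) * h1'

lemma betaI_ineq (N : ℝ) (hN : 1 < N) (ε : ℝ) (hε : 0 < ε) (j : ℕ)
    (hj : N^2*(N+2)/(4*ε) ≤ (j:ℝ)) :
    (4*((j:ℝ)+2)^2 * betaI (N+1) (2*j+2)) * betaI (N+1) (2*j+4)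
      ≤ (N^2/4 + ε) * (betaI (N-1) (2*j+4))^2 := by
  have hjr : (0:ℝ) ≤ (j:ℝ) := Nat.cast_nonneg j
  have hj' : N^2*(N+2) ≤ 4*ε*(j:ℝ) := by
    rw [div_le_iff₀ (by positivity)] at hj; linarith
  have hD : (0:ℝ) < 2*(2*(j:ℝ)+3)*(N+4*(j:ℝ)+10) := by nlinarith
  have hcore := betaI_core N hN j
  have hS2 : (0:ℝ) ≤ (betaI (N-1) (2*j+4))^2 := sq_nonneg _
  apply le_of_mul_le_mul_left _ hD
  rw [hcore]
  have hcoef : N^2*((j:ℝ)+2)*(N+4*(j:ℝ)+8) ≤ 2*(2*(j:ℝ)+3)*(N+4*(j:ℝ)+10)*(N^2/4+ε) := by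
    nlinarith [hj', mul_nonneg hε.le hjr, mul_nonneg (mul_nonneg hε.le hjr) hjr,
      mul_nonneg (mul_nonneg hε.le hjr) (show (0:ℝ) ≤ N by linarith),
      mul_nonneg hε.le (show (0:ℝ) ≤ N by linarith)]
  nlinarith [mul_le_mul_of_nonneg_right hcoef hS2]



lemma omegaN_pos {N : ℝ} (hN : 1 < N) : 0 < omegaN N :=
  div_pos (Real.rpow_pos_of_pos Real.pi_pos _) (Real.Gamma_pos_of_pos (by linarith))

lemma transfer {X : Type*} [MetricSpace X] [MeasurableSpace X] [BorelSpace X]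
    (μ : Measure X) (x₀ : X) (N k : ℝ) (hN : 1 < N) (hk : 0 < k)
    (hcone : ∀ ρ > (0:ℝ), μ (Metric.ball x₀ ρ) = ENNReal.ofReal (k * omegaN N * ρ ^ N))
    (g : ℝ → ℝ) (hg : Continuous g) (hg1 : ∀ t, 1 ≤ t → g t = 0) :
    ∫ x, g (dist x₀ x) ∂μ = (k * omegaN N * N) * ∫ t in (0:ℝ)..1, g t * t ^ (N-1) := by
  have hω := omegaN_pos hN
  have hN1 : (0:ℝ) < N - 1 := by linarith
  set c := k * omegaN N * N with hc
  have hcpos : 0 < c := by positivity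
  have hd_cont : Continuous (fun x : X => dist x₀ x) := continuous_const.dist continuous_id
  have hd_meas : Measurable (fun x : X => dist x₀ x) := hd_cont.measurable
  set w : ℝ → ℝ≥0 := fun t => Set.indicator (Set.Ioi (0:ℝ))
    (fun t => Real.toNNReal (c * t ^ (N-1))) t with hw
  have hw_meas : Measurable w :=
    Measurable.indicator ((measurable_const.mul (cont_rpow_const hN1).measurable).real_toNNReal)
      measurableSet_Ioi
  have hmap : μ.map (fun x => dist x₀ x) = volume.withDensity (fun t => (w t : ℝ≥0∞)) := by
    refine Measure.ext_of_generateFrom_of_iUnion (Set.range Set.Iio)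
      (fun n : ℕ => Set.Iio (n:ℝ))
      (BorelSpace.measurable_eq.trans (borel_eq_generateFrom_Iio ℝ)) isPiSystem_Iio
      ?_ (fun n => ⟨(n:ℝ), rfl⟩) ?_ ?_
    · ext x; simp only [Set.mem_iUnion, Set.mem_Iio, Set.mem_univ, iff_true]
      exact exists_nat_gt x
    · intro n
      rw [Measure.map_apply hd_meas measurableSet_Iio]
      have hsub : (fun x : X => dist x₀ x) ⁻¹' Set.Iio (n:ℝ) ⊆ Metric.ball x₀ ((n:ℝ)+1) := by
        intro x hx
        simp only [Set.mem_preimage, Set.mem_Iio] at hx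
        rw [Metric.mem_ball, dist_comm]; linarith
      refine ne_of_lt (lt_of_le_of_lt (measure_mono hsub) ?_)
      rw [hcone _ (by positivity)]
      exact ENNReal.ofReal_lt_top
    · rintro _ ⟨ρ, rfl⟩
      rw [Measure.map_apply hd_meas measurableSet_Iio,
        withDensity_apply _ measurableSet_Iio]
      have hpre : (fun x : X => dist x₀ x) ⁻¹' Set.Iio ρ = Metric.ball x₀ ρ := by
        ext x; simp [Metric.mem_ball, dist_comm]
      rw [hpre]
      rcases le_or_gt ρ 0 with hρ | hρ
      · rw [Metric.ball_eq_empty.2 hρ, measure_empty]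
        rw [setLIntegral_congr_fun measurableSet_Iio
          (fun t (ht : t < ρ) => ?_), lintegral_zero]
        have : t ∉ Set.Ioi (0:ℝ) := by simp; linarith
        simp [hw, Set.indicator_of_notMem this]
      · rw [hcone ρ hρ]
        have hcoe : ∀ t : ℝ, (w t : ℝ≥0∞)
            = Set.indicator (Set.Ioi (0:ℝ)) (fun t => ENNReal.ofReal (c * t ^ (N-1))) t := by
          intro t
          by_cases ht : t ∈ Set.Ioi (0:ℝ)
          · simp [hw, Set.indicator_of_mem ht, ENNReal.ofReal]
          · simp [hw, Set.indicator_of_notMem ht]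
        simp_rw [hcoe]
        rw [lintegral_indicator measurableSet_Ioi, Measure.restrict_restrict measurableSet_Ioi]
        have hIoo : Set.Ioi (0:ℝ) ∩ Set.Iio ρ = Set.Ioo 0 ρ := Set.Ioi_inter_Iio
        rw [hIoo]
        have hint : IntegrableOn (fun t : ℝ => c * t ^ (N-1)) (Set.Ioo 0 ρ) volume :=
          ((continuous_const.mul (cont_rpow_const hN1)).integrableOn_Ioc).mono_set
            Set.Ioo_subset_Ioc_self
        rw [← ofReal_integral_eq_lintegral_ofReal hint]
        · congr 1
          rw [← integral_Ioc_eq_integral_Ioo, ← intervalIntegral.integral_of_le hρ.le,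
            intervalIntegral.integral_const_mul, integral_rpow (Or.inl (by linarith))]
          rw [Real.zero_rpow (by linarith : N - 1 + 1 ≠ 0)]
          rw [show N - 1 + 1 = N by ring]
          field_simp [hc]
          ring
        · refine (ae_restrict_iff' measurableSet_Ioo).2 (ae_of_all _ (fun t ht => ?_))
          have h0 : (0:ℝ) < t := ht.1
          simp only [Pi.zero_apply]
          positivity
  calc ∫ x, g (dist x₀ x) ∂μ
      = ∫ t, g t ∂(μ.map (fun x => dist x₀ x)) :=
        (integral_map hd_meas.aemeasurable hg.aestronglyMeasurable).symm
    _ = ∫ t, g t ∂(volume.withDensity (fun t => (w t : ℝ≥0∞))) := by rw [hmap]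
    _ = ∫ t, w t • g t := integral_withDensity_eq_integral_smul hw_meas g
    _ = ∫ t, Set.indicator (Set.Ioi (0:ℝ)) (fun t => (c * t ^ (N-1)) * g t) t := by
        apply integral_congr_ae (ae_of_all _ (fun t => ?_))
        by_cases ht : t ∈ Set.Ioi (0:ℝ)
        · have h0 : (0:ℝ) < t := ht
          simp only [hw, Set.indicator_of_mem ht, NNReal.smul_def,
            Real.coe_toNNReal _ (by positivity : (0:ℝ) ≤ c * t ^ (N-1)), smul_eq_mul]
        · simp only [hw, Set.indicator_of_notMem ht, zero_smul]
    _ = ∫ t in Set.Ioi (0:ℝ), (c * t ^ (N-1)) * g t := integral_indicator measurableSet_Ioi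
    _ = (∫ t in Set.Ioc (0:ℝ) 1, (c * t ^ (N-1)) * g t)
        + ∫ t in Set.Ioi (1:ℝ), (c * t ^ (N-1)) * g t := by
        rw [← setIntegral_union (Set.Ioc_disjoint_Ioi le_rfl) measurableSet_Ioi ?_ ?_,
          Set.Ioc_union_Ioi_eq_Ioi zero_le_one]
        · exact ((continuous_const.mul (cont_rpow_const hN1)).mul hg).integrableOn_Ioc
        · apply IntegrableOn.congr_fun (integrableOn_zero)
          · intro t ht
            simp [hg1 t (le_of_lt (Set.mem_Ioi.1 ht))]
          · exact measurableSet_Ioi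
    _ = ∫ t in Set.Ioc (0:ℝ) 1, (c * t ^ (N-1)) * g t := by
        have h0 : ∫ t in Set.Ioi (1:ℝ), (c * t ^ (N-1)) * g t = 0 :=
          setIntegral_eq_zero_of_forall_eq_zero
            (fun t ht => by rw [hg1 t (le_of_lt (Set.mem_Ioi.1 ht))]; ring)
        rw [h0, add_zero]
    _ = ∫ t in (0:ℝ)..1, (c * t ^ (N-1)) * g t := (intervalIntegral.integral_of_le zero_le_one).symm
    _ = c * ∫ t in (0:ℝ)..1, g t * t ^ (N-1) := by
        rw [← intervalIntegral.integral_const_mul]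
        apply intervalIntegral.integral_congr
        intro t _
        ring



lemma real_limsup_bot (f : α → ℝ) : limsup f (⊥ : Filter α) = 0 := by
  rw [Filter.limsup_eq]
  have : {a : ℝ | ∀ᶠ n in (⊥ : Filter α), f n ≤ a} = Set.univ := by
    ext a; simp
  rw [this]
  exact Real.sInf_of_not_bddBelow (by simpa using not_bddBelow_univ)

/-- `F j s = (max s 0)^(j+2)` has derivative `(j+2) (max s 0)^(j+1)` everywhere. -/
lemma hasDerivAt_posPow (j : ℕ) (s : ℝ) :
    HasDerivAt (fun s : ℝ => (max s 0) ^ (j+2)) (((j:ℝ)+2) * (max s 0) ^ (j+1)) s := by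
  rcases lt_trichotomy s 0 with hs | rfl | hs
  · have hev : (fun s : ℝ => (max s 0) ^ (j+2)) =ᶠ[nhds s] (fun _ => (0:ℝ)) := by
      filter_upwards [Iio_mem_nhds hs] with t ht
      rw [max_eq_right (le_of_lt ht)]
      simp
    have h0 : HasDerivAt (fun s : ℝ => (max s 0) ^ (j+2)) 0 s :=
      (hasDerivAt_const s (0:ℝ)).congr_of_eventuallyEq hev
    have : max s 0 = 0 := max_eq_right hs.le
    rw [this]
    simpa using h0
  · rw [hasDerivAt_iff_tendsto_slope]
    have hmax : max (0:ℝ) 0 = 0 := max_self 0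
    rw [hmax]
    rw [zero_pow (Nat.succ_ne_zero j), mul_zero]
    rw [tendsto_zero_iff_norm_tendsto_zero]
    apply squeeze_zero' (Eventually.of_forall (fun t => norm_nonneg _))
      (g := fun t => |t| ^ (j+1))
    · filter_upwards [self_mem_nhdsWithin] with t (ht : t ≠ 0)
      rw [slope_def_field]
      have h00 : (max (0:ℝ) 0) ^ (j+2) = 0 := by rw [hmax]; simp
      rw [h00, sub_zero, sub_zero, norm_div]
      have hF : ‖(max t 0) ^ (j+2)‖ ≤ |t| ^ (j+2) := by
        rw [Real.norm_eq_abs, abs_pow]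
        apply pow_le_pow_left₀ (abs_nonneg _)
        rw [abs_of_nonneg (le_max_right t 0)]
        exact max_le (le_abs_self t) (abs_nonneg t)
      have ht' : (0:ℝ) < |t| := abs_pos.2 ht
      rw [Real.norm_eq_abs t]
      calc ‖(max t 0) ^ (j+2)‖ / |t| ≤ |t| ^ (j+2) / |t| := by gcongr
        _ = |t| ^ (j+1) := by
            rw [pow_succ]
            field_simp
    · have h := ((continuous_abs.fun_pow (j+1)).tendsto (0:ℝ)).mono_left
        (nhdsWithin_le_nhds (s := ({(0:ℝ)}ᶜ : Set ℝ)))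
      simpa using h
  · have hev : (fun s : ℝ => (max s 0) ^ (j+2)) =ᶠ[nhds s] (fun t => t ^ (j+2)) := by
      filter_upwards [Ioi_mem_nhds hs] with t ht
      rw [max_eq_left (le_of_lt ht)]
    have h0 : HasDerivAt (fun s : ℝ => (max s 0) ^ (j+2)) (((j:ℝ)+2) * s ^ (j+1)) s := by
      refine HasDerivAt.congr_of_eventuallyEq ?_ hev
      have := hasDerivAt_pow (j+2) s
      push_cast at this ⊢
      simpa using this
    rw [max_eq_left hs.le]
    exact h0

lemma hasDerivAt_bump (j : ℕ) (t : ℝ) :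
    HasDerivAt (fun t : ℝ => (max (1 - t^2) 0) ^ (j+2))
      ((((j:ℝ)+2) * (max (1 - t^2) 0) ^ (j+1)) * (-(2*t))) t := by
  have hg : HasDerivAt (fun t : ℝ => 1 - t^2) (-(2*t)) t := by
    simpa using (hasDerivAt_pow 2 t).const_sub 1
  exact (hasDerivAt_posPow j (1 - t^2)).comp t hg

lemma bump_deriv_cont (j : ℕ) :
    Continuous (fun t : ℝ => (((j:ℝ)+2) * (max (1 - t^2) 0) ^ (j+1)) * (-(2*t))) := by
  continuity

lemma bump_deriv_bound (j : ℕ) (t : ℝ) :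
    |(((j:ℝ)+2) * (max (1 - t^2) 0) ^ (j+1)) * (-(2*t))| ≤ 2*((j:ℝ)+2) := by
  rcases le_or_gt (|t|) 1 with ht | ht
  · have hm0 : (0:ℝ) ≤ max (1 - t^2) 0 := le_max_right _ _
    have hm1 : max (1 - t^2) 0 ≤ 1 := by
      apply max_le _ zero_le_one
      nlinarith [sq_nonneg t]
    have hp : (max (1 - t^2) 0) ^ (j+1) ≤ 1 := pow_le_one₀ hm0 hm1
    have hp0 : (0:ℝ) ≤ (max (1 - t^2) 0) ^ (j+1) := pow_nonneg hm0 _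
    rw [abs_mul, abs_mul]
    rw [abs_of_nonneg (by positivity : (0:ℝ) ≤ (j:ℝ)+2), abs_pow,
      abs_of_nonneg hm0, abs_neg, abs_mul]
    have h2t : |(2:ℝ)| * |t| ≤ 2 := by rw [abs_two]; nlinarith
    have h1 : ((j:ℝ)+2) * (max (1 - t^2) 0) ^ (j+1) ≤ ((j:ℝ)+2) := by
      nlinarith [Nat.cast_nonneg (α := ℝ) j]
    have := mul_le_mul h1 h2t (by positivity) (by positivity : (0:ℝ) ≤ (j:ℝ)+2)
    linarith
  · have : max (1 - t^2) 0 = 0 := by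
      apply max_eq_right
      nlinarith [sq_abs t, mul_self_nonneg (|t| - 1), abs_nonneg t]
    rw [this]
    rw [zero_pow (Nat.succ_ne_zero j)]
    simp
    positivity

/-- Key upper bound on the local Lipschitz constant of a radial function. -/
lemma lipConst_radial_le {X : Type*} [MetricSpace X] (x₀ : X) (f fd : ℝ → ℝ)
    (hf : ∀ t, HasDerivAt f (fd t) t) (hfd : Continuous fd) (x : X) :
    lipConst (fun y => f (dist x₀ y)) x ≤ |fd (dist x₀ x)| := by
  set r := dist x₀ x with hr
  set l := nhdsWithin x ({x}ᶜ) with hl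
  rcases eq_or_ne l ⊥ with hbot | hbot
  · rw [lipConst, ← hl, hbot, real_limsup_bot]
    exact abs_nonneg _
  haveI : l.NeBot := ⟨hbot⟩
  have key : ∀ η : ℝ, 0 < η → lipConst (fun y => f (dist x₀ y)) x ≤ |fd r| + η := by
    intro η hη
    -- find δ such that |fd s| ≤ |fd r| + η on ball r δ
    have hcont : ContinuousAt (fun s => |fd s|) r := (hfd.abs).continuousAt
    rcases Metric.continuousAt_iff.1 hcont η hη with ⟨δ, hδ, hball⟩
    set C : ℝ≥0 := Real.toNNReal (|fd r| + η) with hC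
    have hCcoe : (C : ℝ) = |fd r| + η := Real.coe_toNNReal _ (by positivity)
    have hlip : LipschitzOnWith C f (Metric.ball r δ) := by
      apply (convex_ball r δ).lipschitzOnWith_of_nnnorm_hasDerivWithin_le
        (f' := fd) (fun s _ => (hf s).hasDerivWithinAt)
      intro s hs
      have := hball (Metric.mem_ball.1 hs)
      rw [Real.dist_eq] at this
      have habs : |fd s| ≤ |fd r| + η := by
        cases' abs_sub_lt_iff.1 this with h1 h2
        linarith
      rw [← NNReal.coe_le_coe, hCcoe]
      simpa [Real.norm_eq_abs] using habs
    have hev : ∀ᶠ y in l, |f (dist x₀ y) - f (dist x₀ x)| / dist x y ≤ |fd r| + η := by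
      have hball_mem : Metric.ball x δ ∈ l := nhdsWithin_le_nhds (Metric.ball_mem_nhds x hδ)
      filter_upwards [hball_mem, self_mem_nhdsWithin] with y hy (hyx : y ∈ ({x}ᶜ : Set X))
      have hyne : y ≠ x := hyx
      have hdpos : 0 < dist x y := dist_pos.2 (fun h => hyne h.symm)
      have hdy : dist x₀ y ∈ Metric.ball r δ := by
        rw [Metric.mem_ball, Real.dist_eq, hr]
        have habs2 : |dist x₀ y - dist x₀ x| ≤ dist x y := by
          rw [dist_comm x₀ y, dist_comm x₀ x, dist_comm x y]
          exact abs_dist_sub_le y x x₀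
        exact lt_of_le_of_lt habs2 (Metric.mem_ball'.1 hy)
      have hdx : dist x₀ x ∈ Metric.ball r δ := by
        rw [Metric.mem_ball, hr]; simpa using hδ
      have := hlip.dist_le_mul _ hdy _ hdx
      rw [Real.dist_eq, Real.dist_eq, hCcoe] at this
      rw [div_le_iff₀ hdpos]
      calc |f (dist x₀ y) - f (dist x₀ x)| ≤ (|fd r| + η) * |dist x₀ y - dist x₀ x| := this
        _ ≤ (|fd r| + η) * dist x y := by
            apply mul_le_mul_of_nonneg_left _ (by positivity)
            rw [dist_comm x₀ y, dist_comm x₀ x, dist_comm x y]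
            exact abs_dist_sub_le y x x₀
        _ = (|fd r| + η) * dist x y := rfl
    apply Filter.limsup_le_of_le _ hev
    apply Filter.isCoboundedUnder_le_of_le l (x := 0)
    intro y
    positivity
  by_contra hcon
  push_neg at hcon
  have := key ((lipConst (fun y => f (dist x₀ y)) x - |fd r|)/2) (by linarith)
  linarith


lemma lipConst_nonneg {X : Type*} [MetricSpace X] (u : X → ℝ) (K : ℝ≥0)
    (hu : LipschitzWith K u) (x : X) : 0 ≤ lipConst u x := by
  set l := nhdsWithin x ({x}ᶜ : Set X) with hl
  rcases eq_or_ne l ⊥ with hbot | hbot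
  · rw [lipConst, ← hl, hbot, real_limsup_bot]
  haveI : l.NeBot := ⟨hbot⟩
  refine Filter.le_limsup_of_frequently_le (Frequently.of_forall (fun y => by positivity)) ?_
  apply Filter.isBoundedUnder_of
  refine ⟨(K : ℝ), fun y => ?_⟩
  rcases eq_or_ne y x with rfl | hyx
  · simp
  · have hdpos : 0 < dist x y := dist_pos.2 (fun h => hyx h.symm)
    rw [div_le_iff₀ hdpos]
    have := hu.dist_le_mul y x
    rw [Real.dist_eq, dist_comm y x] at this
    exact this

lemma interval_eq0 {N : ℝ} (hN : 1 < N) (p : ℕ) :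
    ∫ t in (0:ℝ)..1, (max (1 - t^2) 0) ^ p * t ^ (N-1) = betaI (N-1) p := by
  rw [betaI]
  apply intervalIntegral.integral_congr
  intro t ht
  rw [Set.uIcc_of_le zero_le_one] at ht
  have hmax : max (1 - t^2) 0 = 1 - t^2 := max_eq_left (by nlinarith [ht.1, ht.2])
  show (max (1 - t^2) 0) ^ p * t ^ (N-1) = t ^ (N-1) * (1 - t^2) ^ p
  rw [hmax, mul_comm]

lemma interval_eq2 {N : ℝ} (hN : 1 < N) (p : ℕ) :
    ∫ t in (0:ℝ)..1, (t^2 * (max (1 - t^2) 0) ^ p) * t ^ (N-1) = betaI (N+1) p := by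
  rw [betaI]
  apply intervalIntegral.integral_congr
  intro t ht
  rw [Set.uIcc_of_le zero_le_one] at ht
  have hmax : max (1 - t^2) 0 = 1 - t^2 := max_eq_left (by nlinarith [ht.1, ht.2])
  show (t^2 * (max (1 - t^2) 0) ^ p) * t ^ (N-1) = t ^ (N+1) * (1 - t^2) ^ p
  rw [hmax]
  rcases eq_or_ne t 0 with rfl | ht0
  · rw [Real.zero_rpow (by linarith : N-1 ≠ 0), Real.zero_rpow (by linarith : N+1 ≠ 0)]
    ring
  · have htpos : 0 < t := lt_of_le_of_ne ht.1 (Ne.symm ht0)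
    have h3 : t ^ (N+1) = t ^ (N-1) * t ^ 2 := by
      rw [← Real.rpow_natCast t 2, ← Real.rpow_add htpos]
      congr 1
      push_cast
      ring
    rw [h3]
    ring

/-- Sharpness of the constant `N²/4` in the Heisenberg–Pauli–Weyl uncertainty
principle on a volume cone. -/
theorem hpw_constant_sharp_on_volume_cone {X : Type*} [MetricSpace X] [ProperSpace X]
    [MeasurableSpace X] [BorelSpace X] (μ : Measure X)
    (hμ : ∀ U : Set X, IsOpen U → Bornology.IsBounded U → U.Nonempty →
      0 < μ U ∧ μ U ≠ ⊤)
    (x₀ : X) (N k : ℝ) (hN : 1 < N) (hk : 0 < k)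
    (hcone : ∀ ρ > (0:ℝ), μ (Metric.ball x₀ ρ) = ENNReal.ofReal (k * omegaN N * ρ ^ N)) :
    ∀ ε > (0:ℝ), ∃ u : X → ℝ, (∃ K : NNReal, LipschitzWith K u) ∧
      HasCompactSupport u ∧ u ≠ 0 ∧
      (∫ x, (lipConst u x) ^ 2 ∂μ) * (∫ x, dist x₀ x ^ 2 * (u x) ^ 2 ∂μ) ≤
        (N ^ 2 / 4 + ε) * (∫ x, (u x) ^ 2 ∂μ) ^ 2 := by
  intro ε hε
  have hω := omegaN_pos hN
  have hN1 : (0:ℝ) < N - 1 := by linarith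
  set K0 : ℝ := k * omegaN N * N with hK0
  have hK0pos : 0 < K0 := by positivity
  set j : ℕ := ⌈N^2*(N+2)/(4*ε)⌉₊ with hjdef
  have hjge : N^2*(N+2)/(4*ε) ≤ (j:ℝ) := Nat.le_ceil _
  set f : ℝ → ℝ := fun t => (max (1 - t^2) 0) ^ (j+2) with hfdef
  set fd : ℝ → ℝ := fun t => (((j:ℝ)+2) * (max (1 - t^2) 0) ^ (j+1)) * (-(2*t)) with hfddef
  have hderiv : ∀ t, HasDerivAt f (fd t) t := hasDerivAt_bump j
  have hfdcont : Continuous fd := bump_deriv_cont j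
  have hfcont : Continuous f :=
    ((continuous_const.sub (continuous_pow 2)).max continuous_const).pow (j+2)
  have hd_cont : Continuous (fun x : X => dist x₀ x) := continuous_const.dist continuous_id
  set u : X → ℝ := fun x => f (dist x₀ x) with hudef
  -- Lipschitz
  have hflip : LipschitzWith (Real.toNNReal (2*((j:ℝ)+2))) f := by
    apply lipschitzWith_of_nnnorm_deriv_le (fun t => (hderiv t).differentiableAt)
    intro t
    have hd : deriv f t = fd t := (hderiv t).deriv
    rw [← NNReal.coe_le_coe, Real.coe_toNNReal _ (by positivity), coe_nnnorm,
      Real.norm_eq_abs, hd]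
    exact bump_deriv_bound j t
  have hulip : LipschitzWith (Real.toNNReal (2*((j:ℝ)+2)) * 1) u :=
    hflip.comp (LipschitzWith.dist_right x₀)
  -- vanishing
  have hvanish : ∀ t : ℝ, 1 ≤ t → f t = 0 := by
    intro t ht
    have hm : max (1 - t^2) 0 = 0 := max_eq_right (by nlinarith)
    simp only [hfdef, hm]
    exact zero_pow (by omega)
  have hfd_vanish : ∀ t : ℝ, 1 ≤ t → fd t = 0 := by
    intro t ht
    have hm : max (1 - t^2) 0 = 0 := max_eq_right (by nlinarith)
    simp only [hfddef, hm, zero_pow (by omega : j + 1 ≠ 0)]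
    ring
  have hsupp : HasCompactSupport u := by
    apply HasCompactSupport.intro (isCompact_closedBall x₀ 1)
    intro x hx
    have h1x : (1:ℝ) ≤ dist x₀ x := by
      rw [Metric.mem_closedBall, not_le, dist_comm] at hx
      exact hx.le
    exact hvanish _ h1x
  have hune : u ≠ 0 := by
    intro h
    have h0 : u x₀ = 0 := congrFun h x₀
    simp only [hudef, hfdef, dist_self] at h0
    norm_num at h0
  -- finite on compacts
  haveI : IsFiniteMeasureOnCompacts μ := by
    constructor
    intro s hs
    obtain ⟨r, hr⟩ := hs.isBounded.subset_ball x₀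
    have hsub : s ⊆ Metric.ball x₀ (max r 1) :=
      hr.trans (Metric.ball_subset_ball (le_max_left r 1))
    calc μ s ≤ μ (Metric.ball x₀ (max r 1)) := measure_mono hsub
      _ = ENNReal.ofReal (k * omegaN N * (max r 1) ^ N) :=
          hcone _ (lt_of_lt_of_le one_pos (le_max_right r 1))
      _ < ⊤ := ENNReal.ofReal_lt_top
  -- transfers
  have htrans3 : ∫ x, (u x) ^ 2 ∂μ = K0 * betaI (N-1) (2*j+4) := by
    have hpow : ∀ t : ℝ, (f t)^2 = (max (1 - t^2) 0) ^ (2*j+4) := by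
      intro t
      simp only [hfdef]
      rw [← pow_mul, show (j+2)*2 = 2*j+4 by ring]
    calc ∫ x, (u x) ^ 2 ∂μ
        = ∫ x, (fun t : ℝ => (max (1 - t^2) 0) ^ (2*j+4)) (dist x₀ x) ∂μ := by
          apply integral_congr_ae (ae_of_all _ (fun x => ?_))
          simp only [hudef]
          exact hpow _
      _ = K0 * ∫ t in (0:ℝ)..1, (max (1 - t^2) 0) ^ (2*j+4) * t ^ (N-1) := by
          rw [hK0]
          exact transfer μ x₀ N k hN hk hcone _
            (((continuous_const.sub (continuous_pow 2)).max continuous_const).pow _)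
            (fun t ht => by
              have hm : max (1 - t^2) 0 = 0 := max_eq_right (by nlinarith)
              show max (1 - t^2) 0 ^ (2*j+4) = 0
              rw [hm]
              exact zero_pow (by omega))
      _ = K0 * betaI (N-1) (2*j+4) := by rw [interval_eq0 hN]
  have htrans2 : ∫ x, dist x₀ x ^ 2 * (u x) ^ 2 ∂μ = K0 * betaI (N+1) (2*j+4) := by
    have hpow : ∀ t : ℝ, t^2 * (f t)^2 = t^2 * (max (1 - t^2) 0) ^ (2*j+4) := by
      intro t
      simp only [hfdef]
      rw [← pow_mul, show (j+2)*2 = 2*j+4 by ring]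
    calc ∫ x, dist x₀ x ^ 2 * (u x) ^ 2 ∂μ
        = ∫ x, (fun t : ℝ => t^2 * (max (1 - t^2) 0) ^ (2*j+4)) (dist x₀ x) ∂μ := by
          apply integral_congr_ae (ae_of_all _ (fun x => ?_))
          simp only [hudef]
          exact hpow _
      _ = K0 * ∫ t in (0:ℝ)..1, (t^2 * (max (1 - t^2) 0) ^ (2*j+4)) * t ^ (N-1) := by
          rw [hK0]
          exact transfer μ x₀ N k hN hk hcone _
            ((continuous_pow 2).mul
              (((continuous_const.sub (continuous_pow 2)).max continuous_const).pow _))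
            (fun t ht => by
              have hm : max (1 - t^2) 0 = 0 := max_eq_right (by nlinarith)
              show t^2 * max (1 - t^2) 0 ^ (2*j+4) = 0
              rw [hm, zero_pow (by omega : 2*j+4 ≠ 0)]
              ring)
      _ = K0 * betaI (N+1) (2*j+4) := by rw [interval_eq2 hN]
  have htransfd : ∫ x, (fd (dist x₀ x)) ^ 2 ∂μ
      = K0 * (4*((j:ℝ)+2)^2 * betaI (N+1) (2*j+2)) := by
    calc ∫ x, (fd (dist x₀ x)) ^ 2 ∂μ
        = ∫ x, (fun t : ℝ => (fd t)^2) (dist x₀ x) ∂μ := rfl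
      _ = K0 * ∫ t in (0:ℝ)..1, (fd t)^2 * t ^ (N-1) := by
          rw [hK0]
          exact transfer μ x₀ N k hN hk hcone _ (hfdcont.pow 2)
            (fun t ht => by show fd t ^ 2 = 0; rw [hfd_vanish t ht]; ring)
      _ = K0 * (4*((j:ℝ)+2)^2 * betaI (N+1) (2*j+2)) := by
          congr 1
          rw [← interval_eq2 hN (2*j+2), ← intervalIntegral.integral_const_mul]
          apply intervalIntegral.integral_congr
          intro t ht
          have hpow : (max (1 - t^2) 0)^(2*j+2) = ((max (1 - t^2) 0)^(j+1))^2 := by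
            rw [← pow_mul, show (j+1)*2 = 2*j+2 by ring]
          simp only [hfddef]
          rw [hpow]
          ring
  refine ⟨u, ⟨_, hulip⟩, hsupp, hune, ?_⟩
  by_cases hint : Integrable (fun x => (lipConst u x)^2) μ
  · have hfd2cont : Continuous fun x : X => (fd (dist x₀ x))^2 :=
      (hfdcont.comp hd_cont).pow 2
    have hfd2supp : HasCompactSupport fun x : X => (fd (dist x₀ x))^2 := by
      apply HasCompactSupport.intro (isCompact_closedBall x₀ 1)
      intro x hx
      have h1x : (1:ℝ) ≤ dist x₀ x := by
        rw [Metric.mem_closedBall, not_le, dist_comm] at hx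
        exact hx.le
      rw [hfd_vanish _ h1x]
      ring
    have hfd2int : Integrable (fun x : X => (fd (dist x₀ x))^2) μ :=
      hfd2cont.integrable_of_hasCompactSupport hfd2supp
    have hmono : ∫ x, (lipConst u x)^2 ∂μ ≤ ∫ x, (fd (dist x₀ x))^2 ∂μ := by
      apply integral_mono hint hfd2int
      intro x
      have h1 : lipConst u x ≤ |fd (dist x₀ x)| := by
        rw [hudef]
        exact lipConst_radial_le x₀ f fd hderiv hfdcont x
      have h0 : 0 ≤ lipConst u x := lipConst_nonneg u _ hulip x
      calc (lipConst u x)^2 ≤ |fd (dist x₀ x)|^2 := by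
            apply pow_le_pow_left₀ h0 h1
        _ = (fd (dist x₀ x))^2 := sq_abs _
    have hcore := betaI_ineq N hN ε hε j hjge
    have hL1 : ∫ x, (lipConst u x)^2 ∂μ
        ≤ K0 * (4*((j:ℝ)+2)^2 * betaI (N+1) (2*j+2)) := hmono.trans (le_of_eq htransfd)
    have hL0 : (0:ℝ) ≤ ∫ x, (lipConst u x)^2 ∂μ := integral_nonneg (fun x => sq_nonneg _)
    have hRpos : 0 < betaI (N+1) (2*j+4) := betaI_pos (by linarith) _
    have hPpos : 0 < betaI (N+1) (2*j+2) := betaI_pos (by linarith) _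
    have hSpos : 0 < betaI (N-1) (2*j+4) := betaI_pos hN1 _
    rw [htrans2, htrans3]
    calc (∫ x, (lipConst u x)^2 ∂μ) * (K0 * betaI (N+1) (2*j+4))
        ≤ (K0 * (4*((j:ℝ)+2)^2 * betaI (N+1) (2*j+2))) * (K0 * betaI (N+1) (2*j+4)) := by
          apply mul_le_mul hL1 le_rfl (by positivity) ?_
          positivity
      _ = K0^2 * ((4*((j:ℝ)+2)^2 * betaI (N+1) (2*j+2)) * betaI (N+1) (2*j+4)) := by ring
      _ ≤ K0^2 * ((N^2/4 + ε) * (betaI (N-1) (2*j+4))^2) :=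
          mul_le_mul_of_nonneg_left hcore (by positivity)
      _ = (N^2/4 + ε) * (K0 * betaI (N-1) (2*j+4))^2 := by ring
  · rw [integral_undef hint, zero_mul]
    have h1 : (0:ℝ) ≤ N^2/4 + ε := by nlinarith [sq_nonneg N]
    exact mul_nonneg h1 (sq_nonneg _)
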